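/- Let m ≥ 1, let r : Fin m → ℂ be nonzero complex numbers, let d : Fin m → ℕ, and let a : ℕ → ℂ be a sequence annihilated by the polynomial ∏_{k} (x − r k)^{(d k) + 1}. Then for all natural numbers i and j, the sequence n ↦ a(ni) · a(nj) is annihilated by the polynomial ∏_{k} ∏_{v} (x − (r k)^i · (r v)^j)^{(d k) + (d v) + 1}, where both k and v range over Fin m. -/

import Mathlib

open Polynomial Finset

/-- The shift operator on sequences. -/
noncomputable def Sop : Module.End ℂ (ℕ → ℂ) := LinearMap.funLeft ℂ ℂ (fun n => n + 1)

lemma Sop_apply (b : ℕ → ℂ) (n : ℕ) : Sop b n = b (n + 1) := rfl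

lemma Sop_pow_apply (t : ℕ) (b : ℕ → ℂ) (n : ℕ) : (Sop ^ t) b n = b (n + t) := by
  induction t generalizing b n with
  | zero => simp
  | succ t ih =>
    rw [pow_succ', Module.End.mul_apply, Sop_apply, ih]
    congr 1
    omega

lemma aeval_apply_eq_sum (q : ℂ[X]) (b : ℕ → ℂ) {N : ℕ} (h : q.natDegree < N) (n : ℕ) :
    (aeval Sop q) b n = ∑ t ∈ Finset.range N, q.coeff t * b (n + t) := by
  rw [aeval_eq_sum_range' h]
  simp [LinearMap.sum_apply, Finset.sum_apply, Sop_pow_apply]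

lemma decomp {ι : Type*} [DecidableEq ι] (T : Finset ι) (g : ι → ℂ[X])
    (hcop : (T : Set ι).Pairwise (Function.onFun IsCoprime g)) :
    ∀ b : ℕ → ℂ, (aeval Sop (∏ ρ ∈ T, g ρ)) b = 0 →
    ∃ c : ι → (ℕ → ℂ), b = ∑ ρ ∈ T, c ρ ∧ ∀ ρ ∈ T, (aeval Sop (g ρ)) (c ρ) = 0 := by
  induction T using Finset.induction with
  | empty =>
    intro b hb
    refine ⟨fun _ => 0, ?_, by simp⟩
    simpa using hb
  | @insert ρ T hρT ih =>
    intro b hb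
    have hcopT : (T : Set ι).Pairwise (Function.onFun IsCoprime g) :=
      hcop.mono (by intro x hx; simp [hx])
    have hcop1 : IsCoprime (g ρ) (∏ σ ∈ T, g σ) := by
      apply IsCoprime.prod_right
      intro σ hσ
      exact hcop (by simp) (by simp [hσ]) (by rintro rfl; exact hρT hσ)
    obtain ⟨u, v, huv⟩ := hcop1
    have hprod : (∏ σ ∈ insert ρ T, g σ) = g ρ * ∏ σ ∈ T, g σ :=
      Finset.prod_insert hρT
    have hb1 : (aeval Sop (∏ σ ∈ T, g σ)) ((aeval Sop (u * g ρ)) b) = 0 := by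
      rw [← Module.End.mul_apply, ← map_mul]
      have : (∏ σ ∈ T, g σ) * (u * g ρ) = u * ∏ σ ∈ insert ρ T, g σ := by
        rw [hprod]; ring
      rw [this, map_mul, Module.End.mul_apply, hb, map_zero]
    obtain ⟨c, hc1, hc2⟩ := ih hcopT _ hb1
    refine ⟨Function.update c ρ ((aeval Sop (v * ∏ σ ∈ T, g σ)) b), ?_, ?_⟩
    · rw [Finset.sum_insert hρT, Function.update_self]
      have : ∑ σ ∈ T, Function.update c ρ ((aeval Sop (v * ∏ σ ∈ T, g σ)) b) σ
          = ∑ σ ∈ T, c σ := by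
        apply Finset.sum_congr rfl
        intro σ hσ
        exact Function.update_of_ne (by rintro rfl; exact hρT hσ) _ _
      rw [this, ← hc1]
      have : b = (aeval Sop (u * g ρ + v * ∏ σ ∈ T, g σ)) b := by
        rw [huv]; simp
      conv_lhs => rw [this]
      rw [map_add]
      simp [LinearMap.add_apply, add_comm]
    · intro σ hσ
      rcases Finset.mem_insert.mp hσ with rfl | hσT
      · rw [Function.update_self, ← Module.End.mul_apply, ← map_mul]
        have : g σ * (v * ∏ τ ∈ T, g τ) = v * ∏ τ ∈ insert σ T, g τ := by
          rw [hprod]; ring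
        rw [this, map_mul, Module.End.mul_apply, hb, map_zero]
      · rw [Function.update_of_ne (by rintro rfl; exact hρT hσT)]
        exact hc2 σ hσT

lemma keyB (i j : ℕ) (ρ σ : ℂ) : ∀ (N p q : ℕ) (x y : ℕ → ℂ), p + q ≤ N + 1 →
    (aeval Sop ((X ^ i - C (ρ ^ i)) ^ p)) x = 0 →
    (aeval Sop ((X ^ j - C (σ ^ j)) ^ q)) y = 0 →
    (aeval Sop ((X - C (ρ ^ i * σ ^ j)) ^ N)) (fun n => x (n * i) * y (n * j)) = 0 := by
  have hzero : ∀ (M : ℕ), (aeval Sop ((X - C (ρ ^ i * σ ^ j)) ^ M)) (0 : ℕ → ℂ) = 0 :=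
    fun M => map_zero _
  intro N
  induction N with
  | zero =>
    intro p q x y hpq hx hy
    rcases Nat.eq_zero_or_pos p with rfl | hp
    · have hx0 : x = 0 := by rw [pow_zero, map_one] at hx; simpa using hx
      have : (fun n => x (n * i) * y (n * j)) = (0 : ℕ → ℂ) := by
        funext n; simp [hx0]
      rw [this]; exact hzero _
    rcases Nat.eq_zero_or_pos q with rfl | hq
    · have hy0 : y = 0 := by rw [pow_zero, map_one] at hy; simpa using hy
      have : (fun n => x (n * i) * y (n * j)) = (0 : ℕ → ℂ) := by
        funext n; simp [hy0]
      rw [this]; exact hzero _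
    omega
  | succ N ih =>
    intro p q x y hpq hx hy
    rcases Nat.eq_zero_or_pos p with rfl | hp
    · have hx0 : x = 0 := by rw [pow_zero, map_one] at hx; simpa using hx
      have : (fun n => x (n * i) * y (n * j)) = (0 : ℕ → ℂ) := by
        funext n; simp [hx0]
      rw [this]; exact hzero _
    rcases Nat.eq_zero_or_pos q with rfl | hq
    · have hy0 : y = 0 := by rw [pow_zero, map_one] at hy; simpa using hy
      have : (fun n => x (n * i) * y (n * j)) = (0 : ℕ → ℂ) := by
        funext n; simp [hy0]
      rw [this]; exact hzero _
    obtain ⟨p, rfl⟩ := Nat.exists_eq_succ_of_ne_zero hp.ne'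
    obtain ⟨q, rfl⟩ := Nat.exists_eq_succ_of_ne_zero hq.ne'
    -- one-step identity
    have step : (aeval Sop (X - C (ρ ^ i * σ ^ j))) (fun n => x (n * i) * y (n * j))
        = (fun n => ((aeval Sop (X ^ i - C (ρ ^ i))) x) (n * i)
            * ((aeval Sop ((X : ℂ[X]) ^ j)) y) (n * j))
          + ρ ^ i • (fun n => x (n * i) * ((aeval Sop (X ^ j - C (σ ^ j))) y) (n * j)) := by
      funext n
      have e1 : ∀ (w : ℕ → ℂ) (c : ℂ) (k : ℕ),
          ((aeval Sop (X - C c)) w) k = w (k + 1) - c * w k := by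
        intro w c k
        simp [map_sub, aeval_X, aeval_C, Algebra.algebraMap_eq_smul_one, Sop_apply,
          LinearMap.sub_apply, LinearMap.smul_apply]
      have e2 : ∀ (w : ℕ → ℂ) (c : ℂ) (t k : ℕ),
          ((aeval Sop (X ^ t - C c)) w) k = w (k + t) - c * w k := by
        intro w c t k
        simp [map_sub, map_pow, aeval_X, aeval_C, Algebra.algebraMap_eq_smul_one,
          Sop_pow_apply, LinearMap.sub_apply, LinearMap.smul_apply]
      have e3 : ∀ (w : ℕ → ℂ) (t k : ℕ), ((aeval Sop ((X : ℂ[X]) ^ t)) w) k = w (k + t) := by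
        intro w t k
        simp [map_pow, aeval_X, Sop_pow_apply]
      simp only [Pi.add_apply, Pi.smul_apply, smul_eq_mul, e1, e2, e3]
      have h1 : (n + 1) * i = n * i + i := by ring
      have h2 : (n + 1) * j = n * j + j := by ring
      rw [h1, h2]
      ring
    have hrw : (X - C (ρ ^ i * σ ^ j)) ^ (N + 1)
        = (X - C (ρ ^ i * σ ^ j)) ^ N * (X - C (ρ ^ i * σ ^ j)) := pow_succ _ _
    rw [hrw, map_mul, Module.End.mul_apply, step, map_add, map_smul]
    have t1 : (aeval Sop ((X - C (ρ ^ i * σ ^ j)) ^ N))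
        (fun n => ((aeval Sop (X ^ i - C (ρ ^ i))) x) (n * i)
          * ((aeval Sop ((X : ℂ[X]) ^ j)) y) (n * j)) = 0 := by
      apply ih p (q + 1) _ _ (by omega)
      · rw [← Module.End.mul_apply, ← map_mul, ← pow_succ]
        exact hx
      · rw [← Module.End.mul_apply, ← map_mul]
        have : (X ^ j - C (σ ^ j)) ^ (q + 1) * (X : ℂ[X]) ^ j
            = (X : ℂ[X]) ^ j * (X ^ j - C (σ ^ j)) ^ (q + 1) := by ring
        rw [this, map_mul, Module.End.mul_apply, hy, map_zero]
    have t2 : (aeval Sop ((X - C (ρ ^ i * σ ^ j)) ^ N))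
        (fun n => x (n * i) * ((aeval Sop (X ^ j - C (σ ^ j))) y) (n * j)) = 0 := by
      apply ih (p + 1) q _ _ (by omega) hx
      rw [← Module.End.mul_apply, ← map_mul, ← pow_succ]
      exact hy
    rw [t1, t2]
    simp

lemma keyB2 (i j p q : ℕ) (ρ σ : ℂ) (x y : ℕ → ℂ)
    (hx : (aeval Sop ((X - C ρ) ^ p)) x = 0) (hy : (aeval Sop ((X - C σ) ^ q)) y = 0) :
    (aeval Sop ((X - C (ρ ^ i * σ ^ j)) ^ (p + q - 1)))
      (fun n => x (n * i) * y (n * j)) = 0 := by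
  apply keyB i j ρ σ (p + q - 1) p q x y (by omega)
  · obtain ⟨u, hu⟩ := sub_dvd_pow_sub_pow (X : ℂ[X]) (C ρ) i
    have h : (X ^ i - C (ρ ^ i)) ^ p = u ^ p * (X - C ρ) ^ p := by
      rw [C_pow, hu, mul_pow, mul_comm]
    rw [h, map_mul, Module.End.mul_apply, hx, map_zero]
  · obtain ⟨u, hu⟩ := sub_dvd_pow_sub_pow (X : ℂ[X]) (C σ) j
    have h : (X ^ j - C (σ ^ j)) ^ q = u ^ q * (X - C σ) ^ q := by
      rw [C_pow, hu, mul_pow, mul_comm]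
    rw [h, map_mul, Module.End.mul_apply, hy, map_zero]

theorem product_annihilated
    (m : ℕ) (hm : 1 ≤ m) (r : Fin m → ℂ) (hr : ∀ k, r k ≠ 0)
    (d : Fin m → ℕ) (a : ℕ → ℂ)
    (ha : ∀ n : ℕ, ∑ t ∈ Finset.range ((∑ k : Fin m, (d k + 1)) + 1),
      (∏ k : Fin m, (X - C (r k)) ^ (d k + 1)).coeff t * a (n + t) = 0) :
    ∀ i j : ℕ, ∀ n : ℕ,
      ∑ t ∈ Finset.range ((∑ k : Fin m, ∑ v : Fin m, (d k + d v + 1)) + 1),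
        (∏ k : Fin m, ∏ v : Fin m,
          (X - C ((r k) ^ i * (r v) ^ j)) ^ (d k + d v + 1)).coeff t *
        (a ((n + t) * i) * a ((n + t) * j)) = 0 := by
  classical
  intro i j
  set F : ℂ[X] := ∏ k : Fin m, (X - C (r k)) ^ (d k + 1) with hF
  set P : ℂ[X] := ∏ k : Fin m, ∏ v : Fin m,
    (X - C ((r k) ^ i * (r v) ^ j)) ^ (d k + d v + 1) with hP
  have hFdeg : F.natDegree = ∑ k : Fin m, (d k + 1) := by
    rw [hF, natDegree_prod_of_monic _ _ (fun k _ => (monic_X_sub_C _).pow _)]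
    refine Finset.sum_congr rfl (fun k _ => ?_)
    rw [natDegree_pow, natDegree_X_sub_C, mul_one]
  have hPdeg : P.natDegree = ∑ k : Fin m, ∑ v : Fin m, (d k + d v + 1) := by
    rw [hP, natDegree_prod_of_monic _ _
      (fun k _ => monic_prod_of_monic _ _ (fun v _ => (monic_X_sub_C _).pow _))]
    refine Finset.sum_congr rfl (fun k _ => ?_)
    rw [natDegree_prod_of_monic _ _ (fun v _ => (monic_X_sub_C _).pow _)]
    refine Finset.sum_congr rfl (fun v _ => ?_)
    rw [natDegree_pow, natDegree_X_sub_C, mul_one]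
  have hFa : (aeval Sop F) a = 0 := by
    funext n
    rw [Pi.zero_apply,
      aeval_apply_eq_sum F a (N := (∑ k : Fin m, (d k + 1)) + 1) (by omega) n]
    exact ha n
  -- decomposition of a according to distinct roots
  set R : Finset ℂ := (Finset.univ : Finset (Fin m)).image r with hR
  set mm : ℂ → ℕ := fun ρ => ∑ k ∈ Finset.univ.filter (fun k => r k = ρ), (d k + 1) with hmm
  set g : ℂ → ℂ[X] := fun ρ => (X - C ρ) ^ (mm ρ) with hg
  have hregroup : ∏ ρ ∈ R, g ρ = F := by
    rw [hF, ← Finset.prod_fiberwise_of_maps_to (g := r)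
      (fun k _ => Finset.mem_image_of_mem r (Finset.mem_univ k))
      (fun k => (X - C (r k)) ^ (d k + 1))]
    refine Finset.prod_congr rfl (fun ρ _ => ?_)
    show (X - C ρ) ^ (∑ k ∈ Finset.univ.filter (fun k => r k = ρ), (d k + 1)) = _
    rw [← Finset.prod_pow_eq_pow_sum]
    refine Finset.prod_congr rfl (fun k hk => ?_)
    rw [(Finset.mem_filter.mp hk).2]
  have hcop : (R : Set ℂ).Pairwise (Function.onFun IsCoprime g) := by
    intro ρ _ σ _ hne
    exact (isCoprime_X_sub_C_of_isUnit_sub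
      (isUnit_iff_ne_zero.mpr (sub_ne_zero.mpr hne))).pow
  obtain ⟨c, hc1, hc2⟩ := decomp R g hcop a (by rw [hregroup]; exact hFa)
  -- main goal
  intro n
  set b : ℕ → ℂ := fun n => a (n * i) * a (n * j) with hb
  suffices hPb : (aeval Sop P) b = 0 by
    have h := aeval_apply_eq_sum P b
      (N := (∑ k : Fin m, ∑ v : Fin m, (d k + d v + 1)) + 1) (by omega) n
    rw [hPb, Pi.zero_apply] at h
    exact h.symm
  have hbb : b = ∑ ρ ∈ R, ∑ σ ∈ R, (fun n => c ρ (n * i) * c σ (n * j)) := by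
    funext n
    simp only [Finset.sum_apply]
    rw [hb, hc1]
    simp only [Finset.sum_apply]
    rw [Finset.sum_mul_sum]
  rw [hbb, map_sum]
  refine Finset.sum_eq_zero (fun ρ hρ => ?_)
  rw [map_sum]
  refine Finset.sum_eq_zero (fun σ hσ => ?_)
  obtain ⟨k0, _, hk0⟩ := Finset.mem_image.mp hρ
  obtain ⟨v0, _, hv0⟩ := Finset.mem_image.mp hσ
  set fρ : Finset (Fin m) := Finset.univ.filter (fun k => r k = ρ) with hfρ
  set fσ : Finset (Fin m) := Finset.univ.filter (fun k => r k = σ) with hfσ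
  set E : ℕ := ∑ k ∈ fρ, ∑ v ∈ fσ, (d k + d v + 1) with hE
  have hdvd1 : (∏ k ∈ fρ, ∏ v ∈ fσ,
      (X - C ((r k) ^ i * (r v) ^ j)) ^ (d k + d v + 1)) ∣ P := by
    refine dvd_trans (Finset.prod_dvd_prod_of_dvd _ _ (fun k _ => ?_))
      (Finset.prod_dvd_prod_of_subset fρ Finset.univ _ (Finset.subset_univ _))
    exact Finset.prod_dvd_prod_of_subset fσ Finset.univ _ (Finset.subset_univ _)
  have heq : (∏ k ∈ fρ, ∏ v ∈ fσ,
      (X - C ((r k) ^ i * (r v) ^ j)) ^ (d k + d v + 1))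
      = (X - C (ρ ^ i * σ ^ j)) ^ E := by
    rw [hE, ← Finset.prod_pow_eq_pow_sum]
    refine Finset.prod_congr rfl (fun k hk => ?_)
    rw [← Finset.prod_pow_eq_pow_sum]
    refine Finset.prod_congr rfl (fun v hv => ?_)
    rw [(Finset.mem_filter.mp hk).2, (Finset.mem_filter.mp hv).2]
  -- arithmetic: mm ρ + mm σ - 1 ≤ E
  have hcρ : 1 ≤ fρ.card :=
    Finset.card_pos.mpr ⟨k0, Finset.mem_filter.mpr ⟨Finset.mem_univ _, hk0⟩⟩
  have hcσ : 1 ≤ fσ.card :=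
    Finset.card_pos.mpr ⟨v0, Finset.mem_filter.mpr ⟨Finset.mem_univ _, hv0⟩⟩
  have hmρ : mm ρ = (∑ k ∈ fρ, d k) + fρ.card := by
    show (∑ k ∈ fρ, (d k + 1)) = _
    rw [Finset.sum_add_distrib, Finset.sum_const, smul_eq_mul, mul_one]
  have hmmσ : mm σ = ∑ v ∈ fσ, (d v + 1) := rfl
  have hmσc : fσ.card ≤ mm σ := by
    rw [hmmσ]
    calc fσ.card = ∑ _v ∈ fσ, 1 := by simp
    _ ≤ ∑ v ∈ fσ, (d v + 1) := Finset.sum_le_sum (fun v _ => Nat.le_add_left 1 (d v))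
  have hEval : E = fσ.card * (∑ k ∈ fρ, d k) + fρ.card * mm σ := by
    calc E = ∑ k ∈ fρ, (fσ.card * d k + mm σ) := Finset.sum_congr rfl (fun k _ => by
        calc ∑ v ∈ fσ, (d k + d v + 1) = ∑ v ∈ fσ, (d k + (d v + 1)) :=
              Finset.sum_congr rfl (fun v _ => by omega)
          _ = (∑ _v ∈ fσ, d k) + ∑ v ∈ fσ, (d v + 1) := Finset.sum_add_distrib
          _ = fσ.card * d k + mm σ := by rw [Finset.sum_const, smul_eq_mul, hmmσ])
      _ = (∑ k ∈ fρ, fσ.card * d k) + ∑ _k ∈ fρ, mm σ := Finset.sum_add_distrib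
      _ = fσ.card * (∑ k ∈ fρ, d k) + fρ.card * mm σ := by
          rw [← Finset.mul_sum, Finset.sum_const, smul_eq_mul]
  have harith : mm ρ + mm σ - 1 ≤ E := by
    have hMσ : 1 ≤ mm σ := le_trans hcσ hmσc
    have h1 : (∑ k ∈ fρ, d k) ≤ fσ.card * (∑ k ∈ fρ, d k) :=
      Nat.le_mul_of_pos_left _ hcσ
    have h2 : fρ.card + mm σ ≤ fρ.card * mm σ + 1 := by nlinarith [hcρ, hMσ]
    omega
  have hdvd : (X - C (ρ ^ i * σ ^ j)) ^ (mm ρ + mm σ - 1) ∣ P := by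
    refine dvd_trans (pow_dvd_pow _ harith) ?_
    rw [← heq]
    exact hdvd1
  obtain ⟨W, hW⟩ := hdvd
  rw [hW, mul_comm, map_mul, Module.End.mul_apply,
    keyB2 i j (mm ρ) (mm σ) ρ σ (c ρ) (c σ) (hc2 ρ hρ) (hc2 σ hσ), map_zero]
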